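/- Let f, g be functions from two-element subsets of ℕ to [0,1], let r > 0, and let π : ℕ → ℕ be a bijection such that |g(π(n), π(m)) − f(n,m)| ≤ 2r for all n ≠ m. Let T : ℓ² → ℓ² be the linear isometry determined by T e_n = e_{π(n)} for all n. Then |‖T x‖_g − ‖x‖_f| ≤ 2δr·‖x‖_{ℓ²} for every x ∈ ℓ²; consequently ‖T x‖_g ≤ (1 + 2δr)·‖x‖_f and ‖x‖_f ≤ (1 + 2δr)·‖T x‖_g for every x ∈ ℓ². -/

import Mathlib

/- Context: ℓ² with canonical vectors (e n).  Fix α, δ with 1 < α < α + δ ≤ 200/199.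
For f : two-element subsets of ℕ → [0,1] define the norm
‖x‖_f = sup( {‖x‖_{ℓ²}} ∪ { (1/√2)·(α + δ·f(n,m))·|x n + x m| : n ≠ m } ). -/

noncomputable section

abbrev ℓ2 : Type := lp (fun _ : ℕ => ℝ) 2

noncomputable def e (n : ℕ) : ℓ2 := lp.single 2 n 1

def fnormSet (α δ : ℝ) (f : ℕ → ℕ → ℝ) (x : ℓ2) : Set ℝ :=
  {‖x‖} ∪ {r : ℝ | ∃ n m : ℕ, n ≠ m ∧
    r = (Real.sqrt 2)⁻¹ * (α + δ * f n m) * |x n + x m|}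

noncomputable def fnorm (α δ : ℝ) (f : ℕ → ℕ → ℝ) (x : ℓ2) : ℝ :=
  sSup (fnormSet α δ f x)

/-- Evaluation at a coordinate as a continuous linear map. -/
noncomputable def evalCLM (k : ℕ) : ℓ2 →L[ℝ] ℝ :=
  LinearMap.mkContinuous
    { toFun := fun x : ℓ2 => x k
      map_add' := fun x y => rfl
      map_smul' := fun c x => rfl } 1
    (fun x => by
      rw [one_mul]; exact lp.norm_apply_le_norm (by norm_num : (2 : ENNReal) ≠ 0) x k)

lemma coord_eq (π : ℕ ≃ ℕ) (T : ℓ2 →ₗᵢ[ℝ] ℓ2) (hT : ∀ n : ℕ, T (e n) = e (π n))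
    (x : ℓ2) (k : ℕ) : (T x) k = x (π.symm k) := by
  haveI : Fact ((1 : ENNReal) ≤ 2) := ⟨one_le_two⟩
  have h1 : HasSum (fun n : ℕ => lp.single 2 n (x n)) x :=
    lp.hasSum_single (by norm_num) x
  have h2 : HasSum (fun n : ℕ => T (lp.single 2 n (x n))) (T x) :=
    h1.mapL T.toContinuousLinearMap
  have h3 : ∀ n : ℕ, T (lp.single 2 n (x n)) = x n • e (π n) := by
    intro n
    have : lp.single 2 n (x n) = x n • e n := by
      rw [e, ← lp.single_smul]; norm_num
    rw [this, T.map_smul, hT n]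
  rw [funext h3] at h2
  have h4 : HasSum (fun n : ℕ => (evalCLM k) (x n • e (π n))) ((evalCLM k) (T x)) :=
    h2.mapL (evalCLM k)
  have h5 : ∀ n : ℕ, (evalCLM k) (x n • e (π n)) =
      if n = π.symm k then x (π.symm k) else 0 := by
    intro n
    have he : (evalCLM k) (x n • e (π n)) = x n * (e (π n)) k := rfl
    rw [he]
    by_cases h : n = π.symm k
    · subst h
      have hk : π (π.symm k) = k := π.apply_symm_apply k
      rw [e, hk, lp.single_apply_self]
      simp
    · rw [e, lp.single_apply_ne]
      · simp [h]
      · intro hk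
        exact h (by rw [hk]; simp)
  rw [funext h5] at h4
  have h6 : HasSum (fun n : ℕ => if n = π.symm k then x (π.symm k) else 0)
      (x (π.symm k)) := hasSum_ite_eq (π.symm k) _
  exact h4.unique h6

lemma two_coord_bound (x : ℓ2) {n m : ℕ} (h : n ≠ m) :
    |x n + x m| ≤ Real.sqrt 2 * ‖x‖ := by
  have hsum := lp.sum_rpow_le_norm_rpow
    (by norm_num : 0 < (2 : ENNReal).toReal) x ({n, m} : Finset ℕ)
  rw [Finset.sum_pair h] at hsum
  have ht : (2 : ENNReal).toReal = (2 : ℝ) := by norm_num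
  rw [ht] at hsum
  have h2 : |x n| ^ 2 + |x m| ^ 2 ≤ ‖x‖ ^ 2 := by
    have e1 : ‖x n‖ ^ (2 : ℝ) = |x n| ^ 2 := by
      rw [Real.rpow_two]; norm_num
    have e2 : ‖x m‖ ^ (2 : ℝ) = |x m| ^ 2 := by
      rw [Real.rpow_two]; norm_num
    have e3 : ‖x‖ ^ (2 : ℝ) = ‖x‖ ^ 2 := by rw [Real.rpow_two]
    rw [e1, e2, e3] at hsum
    exact hsum
  have hsq : (x n + x m) ^ 2 ≤ (Real.sqrt 2 * ‖x‖) ^ 2 := by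
    rw [mul_pow, Real.sq_sqrt (by norm_num : (0:ℝ) ≤ 2)]
    nlinarith [sq_abs (x n), sq_abs (x m), sq_nonneg ((x n : ℝ) - x m)]
  calc |x n + x m| = Real.sqrt ((x n + x m) ^ 2) := (Real.sqrt_sq_eq_abs _).symm
    _ ≤ Real.sqrt ((Real.sqrt 2 * ‖x‖) ^ 2) := Real.sqrt_le_sqrt hsq
    _ = Real.sqrt 2 * ‖x‖ := Real.sqrt_sq (by positivity)

lemma fnormSet_le (α δ : ℝ) (hα : 1 < α) (hδ : 0 < δ) (f : ℕ → ℕ → ℝ)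
    (hf : ∀ n m : ℕ, n ≠ m → f n m ∈ Set.Icc (0 : ℝ) 1) (x : ℓ2) :
    ∀ y ∈ fnormSet α δ f x, y ≤ (α + δ) * ‖x‖ := by
  rintro y (hy | ⟨n, m, hnm, rfl⟩)
  · rw [Set.mem_singleton_iff] at hy
    subst hy
    nlinarith [norm_nonneg x]
  · have hb := two_coord_bound x hnm
    have hfm := hf n m hnm
    set s := Real.sqrt 2 with hs_def
    have hs : 0 < s := Real.sqrt_pos.mpr (by norm_num)
    calc s⁻¹ * (α + δ * f n m) * |x n + x m|
        ≤ s⁻¹ * (α + δ) * (s * ‖x‖) := by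
          apply mul_le_mul _ hb (abs_nonneg _) (by positivity)
          apply mul_le_mul_of_nonneg_left _ (by positivity)
          nlinarith [hfm.1, hfm.2]
      _ = (α + δ) * ‖x‖ := by
          rw [show s⁻¹ * (α + δ) * (s * ‖x‖) = (s⁻¹ * s) * ((α + δ) * ‖x‖) by ring,
            inv_mul_cancel₀ hs.ne', one_mul]

lemma fnormSet_bddAbove (α δ : ℝ) (hα : 1 < α) (hδ : 0 < δ) (f : ℕ → ℕ → ℝ)
    (hf : ∀ n m : ℕ, n ≠ m → f n m ∈ Set.Icc (0 : ℝ) 1) (x : ℓ2) :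
    BddAbove (fnormSet α δ f x) :=
  ⟨(α + δ) * ‖x‖, fun y hy => fnormSet_le α δ hα hδ f hf x y hy⟩

lemma fnormSet_nonempty (α δ : ℝ) (f : ℕ → ℕ → ℝ) (x : ℓ2) :
    (fnormSet α δ f x).Nonempty := ⟨‖x‖, Or.inl rfl⟩

lemma norm_le_fnorm (α δ : ℝ) (hα : 1 < α) (hδ : 0 < δ) (f : ℕ → ℕ → ℝ)
    (hf : ∀ n m : ℕ, n ≠ m → f n m ∈ Set.Icc (0 : ℝ) 1) (x : ℓ2) :
    ‖x‖ ≤ fnorm α δ f x :=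
  le_csSup (fnormSet_bddAbove α δ hα hδ f hf x) (Or.inl rfl)

lemma fnorm_compare (α δ : ℝ) (hα : 1 < α) (hδ : 0 < δ) (r : ℝ) (hr : 0 ≤ r)
    (f g : ℕ → ℕ → ℝ)
    (hf : ∀ n m : ℕ, n ≠ m → f n m ∈ Set.Icc (0 : ℝ) 1)
    (hfg : ∀ n m : ℕ, n ≠ m → |g n m - f n m| ≤ 2 * r) (x : ℓ2) :
    fnorm α δ g x ≤ fnorm α δ f x + 2 * δ * r * ‖x‖ := by
  apply csSup_le (fnormSet_nonempty α δ g x)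
  rintro y (hy | ⟨n, m, hnm, rfl⟩)
  · rw [Set.mem_singleton_iff] at hy
    subst hy
    have h1 := norm_le_fnorm α δ hα hδ f hf x
    have h2 : 0 ≤ 2 * δ * r * ‖x‖ := by positivity
    linarith
  · have h1 : (Real.sqrt 2)⁻¹ * (α + δ * f n m) * |x n + x m| ≤ fnorm α δ f x :=
      le_csSup (fnormSet_bddAbove α δ hα hδ f hf x) (Or.inr ⟨n, m, hnm, rfl⟩)
    have hb := two_coord_bound x hnm
    set s := Real.sqrt 2 with hs_def
    have hs : 0 < s := Real.sqrt_pos.mpr (by norm_num)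
    set t := |x n + x m| with ht_def
    have ht : 0 ≤ t := abs_nonneg _
    have hst : s⁻¹ * t ≤ ‖x‖ := by
      have := mul_le_mul_of_nonneg_left hb (by positivity : (0:ℝ) ≤ s⁻¹)
      rwa [show s⁻¹ * (s * ‖x‖) = (s⁻¹ * s) * ‖x‖ by ring,
        inv_mul_cancel₀ hs.ne', one_mul] at this
    have hle : g n m - f n m ≤ 2 * r := (abs_le.mp (hfg n m hnm)).2
    have key : s⁻¹ * δ * (g n m - f n m) * t ≤ 2 * δ * r * ‖x‖ := by
      have k1 : s⁻¹ * δ * (g n m - f n m) * t ≤ s⁻¹ * δ * (2 * r) * t := by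
        apply mul_le_mul_of_nonneg_right _ ht
        exact mul_le_mul_of_nonneg_left hle (by positivity)
      have k2 : s⁻¹ * δ * (2 * r) * t = 2 * δ * r * (s⁻¹ * t) := by ring
      have k3 : 2 * δ * r * (s⁻¹ * t) ≤ 2 * δ * r * ‖x‖ :=
        mul_le_mul_of_nonneg_left hst (by positivity)
      linarith
    have expand : s⁻¹ * (α + δ * g n m) * t =
        s⁻¹ * (α + δ * f n m) * t + s⁻¹ * δ * (g n m - f n m) * t := by ring
    linarith

theorem stmt5 (α δ : ℝ) (hα : 1 < α) (hδ : α < α + δ) (hαδ : α + δ ≤ 200 / 199)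
    (f g : ℕ → ℕ → ℝ)
    (hfsymm : ∀ n m, f n m = f m n) (hgsymm : ∀ n m, g n m = g m n)
    (hf : ∀ n m : ℕ, n ≠ m → f n m ∈ Set.Icc (0 : ℝ) 1)
    (hg : ∀ n m : ℕ, n ≠ m → g n m ∈ Set.Icc (0 : ℝ) 1)
    (r : ℝ) (hr : 0 < r)
    (π : ℕ ≃ ℕ) (hπ : ∀ n m : ℕ, n ≠ m → |g (π n) (π m) - f n m| ≤ 2 * r)
    (T : ℓ2 →ₗᵢ[ℝ] ℓ2) (hT : ∀ n : ℕ, T (e n) = e (π n)) :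
    ∀ x : ℓ2,
      |fnorm α δ g (T x) - fnorm α δ f x| ≤ 2 * δ * r * ‖x‖ ∧
      fnorm α δ g (T x) ≤ (1 + 2 * δ * r) * fnorm α δ f x ∧
      fnorm α δ f x ≤ (1 + 2 * δ * r) * fnorm α δ g (T x) := by
  intro x
  have hδ0 : 0 < δ := by linarith
  set g' : ℕ → ℕ → ℝ := fun n m => g (π n) (π m) with hg'_def
  have hg' : ∀ n m : ℕ, n ≠ m → g' n m ∈ Set.Icc (0 : ℝ) 1 :=
    fun n m h => hg _ _ (π.injective.ne h)
  have hnorm : ‖T x‖ = ‖x‖ := T.norm_map x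
  have hset : fnormSet α δ g (T x) = fnormSet α δ g' x := by
    ext y
    constructor
    · rintro (hy | ⟨n, m, hnm, rfl⟩)
      · rw [Set.mem_singleton_iff] at hy
        exact Or.inl (by rw [Set.mem_singleton_iff, hy, hnorm])
      · refine Or.inr ⟨π.symm n, π.symm m, ?_, ?_⟩
        · intro hc
          exact hnm (by rw [← π.apply_symm_apply n, ← π.apply_symm_apply m, hc])
        · rw [coord_eq π T hT, coord_eq π T hT]
          simp [hg'_def]
    · rintro (hy | ⟨n, m, hnm, rfl⟩)
      · rw [Set.mem_singleton_iff] at hy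
        exact Or.inl (by rw [Set.mem_singleton_iff, hy, hnorm])
      · refine Or.inr ⟨π n, π m, π.injective.ne hnm, ?_⟩
        rw [coord_eq π T hT, coord_eq π T hT]
        simp [hg'_def]
  have heq : fnorm α δ g (T x) = fnorm α δ g' x := by rw [fnorm, fnorm, hset]
  have hA : fnorm α δ g' x ≤ fnorm α δ f x + 2 * δ * r * ‖x‖ :=
    fnorm_compare α δ hα hδ0 r hr.le f g' hf (fun n m h => hπ n m h) x
  have hB : fnorm α δ f x ≤ fnorm α δ g' x + 2 * δ * r * ‖x‖ :=
    fnorm_compare α δ hα hδ0 r hr.le g' f hg'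
      (fun n m h => by rw [abs_sub_comm]; exact hπ n m h) x
  have hx1 : ‖x‖ ≤ fnorm α δ f x := norm_le_fnorm α δ hα hδ0 f hf x
  have hx2 : ‖x‖ ≤ fnorm α δ g' x := norm_le_fnorm α δ hα hδ0 g' hg' x
  have hmul1 : 2 * δ * r * ‖x‖ ≤ 2 * δ * r * fnorm α δ f x :=
    mul_le_mul_of_nonneg_left hx1 (by positivity)
  have hmul2 : 2 * δ * r * ‖x‖ ≤ 2 * δ * r * fnorm α δ g' x :=
    mul_le_mul_of_nonneg_left hx2 (by positivity)
  have hexp1 : (1 + 2 * δ * r) * fnorm α δ f x =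
      fnorm α δ f x + 2 * δ * r * fnorm α δ f x := by ring
  have hexp2 : (1 + 2 * δ * r) * fnorm α δ g' x =
      fnorm α δ g' x + 2 * δ * r * fnorm α δ g' x := by ring
  refine ⟨?_, ?_, ?_⟩
  · rw [heq, abs_le]
    constructor <;> linarith
  · rw [heq]; linarith
  · rw [heq]; linarith
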